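/- Let (T, (a_t,b_t,w_t)_{t∈T}) be a nonempty labeled long-edge family with a distribution Δ. For k ∈ ℕ define Q̃_*(k) = ∑_P (−1)^{|P|−1}·(|P|−1)! · ∏_{E ∈ P} ∏_{i ∈ ℕ} (k + i − w_i(E) + m_i(E))_{m_i(E)}, where the outer sum is over all partitions P of T into nonempty blocks and |P| is the number of blocks (each inner product is finite, since all but finitely many factors equal 1). Then there exist integers A and B such that Q̃_*(k) = A·k + B for all k ∈ ℕ; in particular Q̃_*(k) is linear in the offset k. -/

import Mathlib

open scoped Classical

/-- `w_i(E)`: the total weight of the edges in `E` lying over the interval `[i, i+1]`. -/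
def wOf {T : Type} (a b w : T → ℕ) (E : Finset T) (i : ℕ) : ℕ :=
  ∑ t ∈ E.filter (fun t => a t ≤ i ∧ i < b t), w t

/-- `m_i(E)`: the number of edges in `E` whose distribution value is `i`. -/
def mOf {T : Type} (Δ : T → ℕ) (E : Finset T) (i : ℕ) : ℕ :=
  (E.filter (fun t => Δ t = i)).card

/-- `P` is a partition of the finite type `T` into nonempty blocks. -/
def IsPartitionOfUniv {T : Type} (P : Finset (Finset T)) : Prop :=
  (∀ E ∈ P, E.Nonempty) ∧ ∀ x : T, ∃! E, E ∈ P ∧ x ∈ E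

/-- The (allowability-free) count `N_*` of orderings of the `k`-offset family
restricted to the block `E`. -/
noncomputable def NstarOffset {T : Type} (a b w Δ : T → ℕ) (k : ℕ) (E : Finset T) : ℤ :=
  ∏ᶠ i : ℕ, (descPochhammer ℤ (mOf Δ E i)).eval
    ((k : ℤ) + (i : ℤ) - (wOf a b w E i : ℤ) + (mOf Δ E i : ℤ))

set_option linter.unusedSectionVars false
set_option linter.unusedVariables false
set_option maxHeartbeats 1000000

namespace QstarAux

variable {T : Type} [DecidableEq T] (a b w Δ : T → ℕ)


def cpart (q : ℕ) : ℤ := (-1) ^ (q - 1) * (Nat.factorial (q - 1) : ℤ)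

lemma cpart_key {q : ℕ} (hq : 1 ≤ q) :
    cpart q + (q - 1 : ℕ) * cpart (q - 1) = if q = 1 then 1 else 0 := by
  rcases q with _ | q
  · omega
  · rcases q with _ | m
    · simp [cpart]
    · have h : (m + 1 + 1 : ℕ) - 1 = m + 1 := rfl
      simp only [cpart, h, Nat.add_sub_cancel, if_neg (by omega : ¬ m + 1 + 1 = 1)]
      push_cast [Nat.factorial_succ]
      ring

def isPartOn (E : Finset T) (P : Finset (Finset T)) : Prop :=
  (∀ B ∈ P, B.Nonempty) ∧ (∀ B ∈ P, B ⊆ E) ∧ ∀ x ∈ E, ∃! B, B ∈ P ∧ x ∈ B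

noncomputable def partsOn (E : Finset T) : Finset (Finset (Finset T)) :=
  (E.powerset.powerset).filter (isPartOn E)

lemma mem_partsOn {E : Finset T} {P : Finset (Finset T)} :
    P ∈ partsOn E ↔ isPartOn E P := by
  simp only [partsOn, Finset.mem_filter, Finset.mem_powerset, and_iff_right_iff_imp]
  intro h B hB
  simpa [Finset.mem_powerset] using h.2.1 B hB

lemma singleton_mem_partsOn {E : Finset T} (hE : E.Nonempty) : {E} ∈ partsOn E := by
  rw [mem_partsOn]
  refine ⟨?_, ?_, ?_⟩
  · intro B hB; rw [Finset.mem_singleton] at hB; subst hB; exact hE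
  · intro B hB; rw [Finset.mem_singleton] at hB; subst hB; exact Finset.Subset.refl _
  · intro x hx
    exact ⟨E, ⟨Finset.mem_singleton_self E, hx⟩, by
      rintro B ⟨hB, -⟩; rwa [Finset.mem_singleton] at hB⟩

lemma partsOn_nonempty {E : Finset T} {P : Finset (Finset T)} (hE : E.Nonempty)
    (hP : P ∈ partsOn E) : P.Nonempty := by
  rw [mem_partsOn] at hP
  obtain ⟨x, hx⟩ := hE
  obtain ⟨B, ⟨hB, -⟩, -⟩ := hP.2.2 x hx
  exact ⟨B, hB⟩

lemma filter_mem_card_one {E : Finset T} {P : Finset (Finset T)} (hP : P ∈ partsOn E)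
    {t : T} (ht : t ∈ E) : (P.filter (fun B => t ∈ B)).card = 1 := by
  rw [mem_partsOn] at hP
  obtain ⟨B₀, ⟨hB₀, htB₀⟩, huniq⟩ := hP.2.2 t ht
  rw [Finset.card_eq_one]
  refine ⟨B₀, ?_⟩
  ext B
  simp only [Finset.mem_filter, Finset.mem_singleton]
  constructor
  · rintro ⟨h1, h2⟩; exact huniq B ⟨h1, h2⟩
  · rintro rfl; exact ⟨hB₀, htB₀⟩

lemma card_one_partsOn {E : Finset T} {P : Finset (Finset T)}
    (hP : P ∈ partsOn E) (h1 : P.card = 1) : P = {E} := by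
  rw [Finset.card_eq_one] at h1
  obtain ⟨B, rfl⟩ := h1
  rw [mem_partsOn] at hP
  have hBE : B ⊆ E := hP.2.1 B (Finset.mem_singleton_self B)
  have hEB : E ⊆ B := by
    intro x hx
    obtain ⟨C, ⟨hC, hxC⟩, -⟩ := hP.2.2 x hx
    rw [Finset.mem_singleton] at hC
    subst hC; exact hxC
  rw [Finset.Subset.antisymm hBE hEB]

lemma notmem_insert_part {E B : Finset T} {P : Finset (Finset T)}
    (hP : P ∈ partsOn B) (hne : (E \ B).Nonempty) : (E \ B) ∉ P := by
  intro hmem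
  rw [mem_partsOn] at hP
  obtain ⟨x, hx⟩ := hne
  have hsub := hP.2.1 _ hmem hx
  rw [Finset.mem_sdiff] at hx
  exact hx.2 hsub

lemma insert_part {E B : Finset T} {P : Finset (Finset T)} (hBE : B ⊆ E)
    (hP : P ∈ partsOn B) (hne : (E \ B).Nonempty) :
    insert (E \ B) P ∈ partsOn E := by
  rw [mem_partsOn] at hP ⊢
  obtain ⟨h1, h2, h3⟩ := hP
  refine ⟨?_, ?_, ?_⟩
  · intro C hC
    rcases Finset.mem_insert.mp hC with rfl | hC
    · exact hne
    · exact h1 C hC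
  · intro C hC
    rcases Finset.mem_insert.mp hC with rfl | hC
    · exact Finset.sdiff_subset
    · exact (h2 C hC).trans hBE
  · intro x hx
    by_cases hxB : x ∈ B
    · obtain ⟨C, ⟨hC, hxC⟩, huniq⟩ := h3 x hxB
      refine ⟨C, ⟨Finset.mem_insert_of_mem hC, hxC⟩, ?_⟩
      rintro C' ⟨hC', hxC'⟩
      rcases Finset.mem_insert.mp hC' with rfl | hC'
      · exact absurd hxB (Finset.mem_sdiff.mp hxC').2
      · exact huniq C' ⟨hC', hxC'⟩
    · refine ⟨E \ B, ⟨Finset.mem_insert_self _ _, Finset.mem_sdiff.mpr ⟨hx, hxB⟩⟩, ?_⟩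
      rintro C' ⟨hC', hxC'⟩
      rcases Finset.mem_insert.mp hC' with rfl | hC'
      · rfl
      · exact absurd (h2 C' hC' hxC') hxB

lemma erase_part {E R : Finset T} {Q : Finset (Finset T)} (hQ : Q ∈ partsOn E)
    (hR : R ∈ Q) : Q.erase R ∈ partsOn (E \ R) := by
  rw [mem_partsOn] at hQ ⊢
  obtain ⟨h1, h2, h3⟩ := hQ
  refine ⟨?_, ?_, ?_⟩
  · intro C hC; exact h1 C (Finset.mem_of_mem_erase hC)
  · intro C hC x hxC
    have hCQ := Finset.mem_of_mem_erase hC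
    rw [Finset.mem_sdiff]
    refine ⟨h2 C hCQ hxC, ?_⟩
    intro hxR
    obtain ⟨B₀, -, huniq⟩ := h3 x (h2 C hCQ hxC)
    have e1 := huniq C ⟨hCQ, hxC⟩
    have e2 := huniq R ⟨hR, hxR⟩
    exact (Finset.ne_of_mem_erase hC) (e1.trans e2.symm)
  · intro x hx
    rw [Finset.mem_sdiff] at hx
    obtain ⟨C, ⟨hC, hxC⟩, huniq⟩ := h3 x hx.1
    have hCR : C ≠ R := by rintro rfl; exact hx.2 hxC
    refine ⟨C, ⟨Finset.mem_erase.mpr ⟨hCR, hC⟩, hxC⟩, ?_⟩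
    rintro C' ⟨hC', hxC'⟩
    exact huniq C' ⟨Finset.mem_of_mem_erase hC', hxC'⟩

noncomputable def ellOf (f : Finset T → ℤ) (E : Finset T) : ℤ :=
  ∑ P ∈ partsOn E, cpart P.card * ∏ B ∈ P, f B

/-- The key "pointing" identity. -/
lemma point {f : Finset T → ℤ} (hf : f ∅ = 1) {E : Finset T} {t₀ : T} (ht₀ : t₀ ∈ E) :
    ∑ B ∈ E.powerset.filter (fun B => t₀ ∈ B), ellOf f B * f (E \ B) = f E := by
  classical
  set filt := E.powerset.filter (fun B => t₀ ∈ B) with hfilt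
  have hEfilt : E ∈ filt := by
    simp [hfilt, Finset.mem_filter, Finset.mem_powerset, ht₀]
  rw [← Finset.add_sum_erase _ _ hEfilt]
  have hEE : E \ E = ∅ := Finset.sdiff_self E
  rw [hEE, hf, mul_one]
  -- expand ellOf in the remaining sum
  have expand : ∀ B ∈ filt.erase E, ellOf f B * f (E \ B)
      = ∑ P ∈ partsOn B, cpart P.card * (∏ C ∈ P, f C) * f (E \ B) := by
    intro B _
    rw [ellOf, Finset.sum_mul]
  rw [Finset.sum_congr rfl expand]
  rw [← Finset.sum_sigma (filt.erase E) (fun B => partsOn B)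
    (fun p => cpart p.2.card * (∏ C ∈ p.2, f C) * f (E \ p.1))]
  -- reindex to (partition of E, block not containing t₀)
  have key : ∑ p ∈ (filt.erase E).sigma (fun B => partsOn B),
      cpart p.2.card * (∏ C ∈ p.2, f C) * f (E \ p.1)
      = ∑ q ∈ (partsOn E).sigma (fun Q => Q.filter (fun R => t₀ ∉ R)),
      cpart (q.1.card - 1) * (∏ C ∈ q.1.erase q.2, f C) * f q.2 := by
    refine Finset.sum_nbij' (fun p => ⟨insert (E \ p.1) p.2, E \ p.1⟩)
      (fun q => ⟨E \ q.2, q.1.erase q.2⟩) ?_ ?_ ?_ ?_ ?_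
    · rintro ⟨B, P⟩ hp
      rw [Finset.mem_sigma] at hp
      obtain ⟨hB, hP⟩ := hp
      have hBne := Finset.ne_of_mem_erase hB
      have hBmem := Finset.mem_of_mem_erase hB
      rw [hfilt, Finset.mem_filter, Finset.mem_powerset] at hBmem
      have hne : (E \ B).Nonempty := by
        rw [Finset.sdiff_nonempty]
        intro hEB
        exact hBne (Finset.Subset.antisymm hBmem.1 hEB)
      rw [Finset.mem_sigma]
      constructor
      · exact insert_part hBmem.1 hP hne
      · rw [Finset.mem_filter]
        refine ⟨Finset.mem_insert_self _ _, ?_⟩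
        rw [Finset.mem_sdiff]
        push_neg
        intro _; exact hBmem.2
    · rintro ⟨Q, R⟩ hq
      rw [Finset.mem_sigma] at hq
      obtain ⟨hQ, hR⟩ := hq
      rw [Finset.mem_filter] at hR
      obtain ⟨hRQ, hRt⟩ := hR
      have hQ' := mem_partsOn.mp hQ
      have hRE : R ⊆ E := hQ'.2.1 R hRQ
      have hRne : R.Nonempty := hQ'.1 R hRQ
      rw [Finset.mem_sigma]
      constructor
      · rw [Finset.mem_erase]
        constructor
        · intro hER
          obtain ⟨x, hx⟩ := hRne
          have hER' : E \ R = E := hER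
          have hx2 : x ∈ E \ R := by rw [hER']; exact hRE hx
          exact (Finset.mem_sdiff.mp hx2).2 hx
        · rw [hfilt, Finset.mem_filter, Finset.mem_powerset]
          exact ⟨Finset.sdiff_subset, Finset.mem_sdiff.mpr ⟨ht₀, hRt⟩⟩
      · exact erase_part hQ hRQ
    · rintro ⟨B, P⟩ hp
      rw [Finset.mem_sigma] at hp
      obtain ⟨hB, hP⟩ := hp
      have hBmem := Finset.mem_of_mem_erase hB
      rw [hfilt, Finset.mem_filter, Finset.mem_powerset] at hBmem
      have hne : (E \ B).Nonempty := by
        rw [Finset.sdiff_nonempty]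
        intro hEB
        exact (Finset.ne_of_mem_erase hB) (Finset.Subset.antisymm hBmem.1 hEB)
      have h1 : E \ (E \ B) = B := Finset.sdiff_sdiff_eq_self hBmem.1
      have h2 : (insert (E \ B) P).erase (E \ B) = P :=
        Finset.erase_insert (notmem_insert_part hP hne)
      dsimp only
      rw [h1, h2]
    · rintro ⟨Q, R⟩ hq
      rw [Finset.mem_sigma] at hq
      obtain ⟨hQ, hR⟩ := hq
      rw [Finset.mem_filter] at hR
      have hQ' := mem_partsOn.mp hQ
      have hRE : R ⊆ E := hQ'.2.1 R hR.1
      have h1 : E \ (E \ R) = R := Finset.sdiff_sdiff_eq_self hRE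
      have h2 : insert R (Q.erase R) = Q := Finset.insert_erase hR.1
      dsimp only
      rw [h1, h2]
    · rintro ⟨B, P⟩ hp
      rw [Finset.mem_sigma] at hp
      obtain ⟨hB, hP⟩ := hp
      have hBmem := Finset.mem_of_mem_erase hB
      rw [hfilt, Finset.mem_filter, Finset.mem_powerset] at hBmem
      have hne : (E \ B).Nonempty := by
        rw [Finset.sdiff_nonempty]
        intro hEB
        exact (Finset.ne_of_mem_erase hB) (Finset.Subset.antisymm hBmem.1 hEB)
      have h2 : (insert (E \ B) P).erase (E \ B) = P :=
        Finset.erase_insert (notmem_insert_part hP hne)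
      have h3 : (insert (E \ B) P).card = P.card + 1 :=
        Finset.card_insert_of_notMem (notmem_insert_part hP hne)
      dsimp only
      rw [h2, h3, Nat.add_sub_cancel]
  rw [key, Finset.sum_sigma]
  -- now collapse the inner sum
  have inner : ∀ Q ∈ partsOn E,
      (∑ R ∈ Q.filter (fun R => t₀ ∉ R),
        cpart (Q.card - 1) * (∏ C ∈ Q.erase R, f C) * f R)
      = ((Q.card - 1 : ℕ) : ℤ) * cpart (Q.card - 1) * ∏ C ∈ Q, f C := by
    intro Q hQ
    have step : ∀ R ∈ Q.filter (fun R => t₀ ∉ R),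
        cpart (Q.card - 1) * (∏ C ∈ Q.erase R, f C) * f R
        = cpart (Q.card - 1) * ∏ C ∈ Q, f C := by
      intro R hR
      rw [Finset.mem_filter] at hR
      rw [mul_assoc, Finset.prod_erase_mul _ _ hR.1]
    rw [Finset.sum_congr rfl step, Finset.sum_const, nsmul_eq_mul]
    have hcard : (Q.filter (fun R => t₀ ∉ R)).card = Q.card - 1 := by
      have h1 : (Q.filter (fun R => t₀ ∈ R)).card = 1 := filter_mem_card_one hQ ht₀
      have h2 := Finset.card_filter_add_card_filter_not
        (s := Q) (p := fun R => t₀ ∈ R)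
      omega
    rw [hcard, mul_assoc]
  rw [Finset.sum_congr rfl inner]
  -- combine with the ellOf E term
  rw [ellOf, ← Finset.sum_add_distrib]
  have final : ∀ Q ∈ partsOn E,
      cpart Q.card * (∏ B ∈ Q, f B)
        + ((Q.card - 1 : ℕ) : ℤ) * cpart (Q.card - 1) * ∏ C ∈ Q, f C
      = (if Q.card = 1 then 1 else 0) * ∏ C ∈ Q, f C := by
    intro Q hQ
    have hq1 : 1 ≤ Q.card := by
      have := partsOn_nonempty ⟨t₀, ht₀⟩ hQ
      exact Finset.card_pos.mpr this
    rw [← cpart_key hq1]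
    ring
  rw [Finset.sum_congr rfl final]
  have last : ∑ Q ∈ partsOn E, (if Q.card = 1 then 1 else 0) * ∏ C ∈ Q, f C
      = ∑ Q ∈ (partsOn E).filter (fun Q => Q.card = 1), ∏ C ∈ Q, f C := by
    rw [Finset.sum_filter]
    refine Finset.sum_congr rfl ?_
    intro Q _
    by_cases h : Q.card = 1 <;> simp [h]
  rw [last]
  have sing : (partsOn E).filter (fun Q => Q.card = 1) = {({E} : Finset (Finset T))} := by
    ext Q
    rw [Finset.mem_filter, Finset.mem_singleton]
    constructor
    · rintro ⟨hQ, h1⟩; exact card_one_partsOn hQ h1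
    · rintro rfl
      exact ⟨singleton_mem_partsOn ⟨t₀, ht₀⟩, Finset.card_singleton E⟩
  rw [sing, Finset.sum_singleton, Finset.prod_singleton]


noncomputable def convOf (f g : Finset T → ℤ) (E : Finset T) : ℤ :=
  ∑ B ∈ E.powerset, f B * g (E \ B)

lemma convOf_empty {f g : Finset T → ℤ} (hf : f ∅ = 1) (hg : g ∅ = 1) :
    convOf f g ∅ = 1 := by
  simp [convOf, hf, hg]

lemma ell_conv {f g : Finset T → ℤ} (hf : f ∅ = 1) (hg : g ∅ = 1) :
    ∀ (n : ℕ) (E : Finset T), E.card = n → E.Nonempty →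
      ellOf (convOf f g) E = ellOf f E + ellOf g E := by
  intro n
  induction n using Nat.strong_induction_on with
  | _ n IH =>
    intro E hcard hE
    obtain ⟨t₀, ht₀⟩ := hE
    set h := convOf f g with hh
    have hh0 : h ∅ = 1 := convOf_empty hf hg
    set filt := E.powerset.filter (fun B => t₀ ∈ B) with hfilt
    -- (i)
    have pi : ∑ B ∈ filt, ellOf h B * h (E \ B) = h E := point hh0 ht₀
    -- (ii)
    have pii : h E = ∑ B ∈ filt, (ellOf f B + ellOf g B) * h (E \ B) := by
      have split : h E = (∑ C ∈ E.powerset.filter (fun C => t₀ ∈ C), f C * g (E \ C))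
          + ∑ C ∈ E.powerset.filter (fun C => ¬ t₀ ∈ C), f C * g (E \ C) := by
        rw [hh, convOf, Finset.sum_filter_add_sum_filter_not]
      have part1 : ∑ C ∈ E.powerset.filter (fun C => t₀ ∈ C), f C * g (E \ C)
          = ∑ B ∈ filt, ellOf f B * h (E \ B) := by
        have e1 : ∀ C ∈ E.powerset.filter (fun C => t₀ ∈ C),
            f C * g (E \ C) = ∑ B ∈ C.powerset.filter (fun B => t₀ ∈ B),
              ellOf f B * f (C \ B) * g (E \ C) := by
          intro C hC
          rw [Finset.mem_filter] at hC
          rw [← Finset.sum_mul, point hf hC.2]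
        rw [Finset.sum_congr rfl e1]
        rw [Finset.sum_comm' (s := E.powerset.filter (fun C => t₀ ∈ C))
          (t := fun C => C.powerset.filter (fun B => t₀ ∈ B))
          (t' := filt) (s' := fun B => E.powerset.filter (fun C => B ⊆ C)) ?_]
        · refine Finset.sum_congr rfl ?_
          intro B hB
          rw [hfilt, Finset.mem_filter, Finset.mem_powerset] at hB
          have inner : ∑ C ∈ E.powerset.filter (fun C => B ⊆ C),
              ellOf f B * f (C \ B) * g (E \ C)
              = ∑ C' ∈ (E \ B).powerset, ellOf f B * f C' * g ((E \ B) \ C') := by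
            refine Finset.sum_nbij' (fun C => C \ B) (fun C' => B ∪ C') ?_ ?_ ?_ ?_ ?_
            · intro C hC
              rw [Finset.mem_filter, Finset.mem_powerset] at hC
              rw [Finset.mem_powerset]
              exact Finset.sdiff_subset_sdiff hC.1 (Finset.Subset.refl B)
            · intro C' hC'
              rw [Finset.mem_powerset] at hC'
              rw [Finset.mem_filter, Finset.mem_powerset]
              constructor
              · exact Finset.union_subset hB.1 (hC'.trans Finset.sdiff_subset)
              · exact Finset.subset_union_left
            · intro C hC
              rw [Finset.mem_filter, Finset.mem_powerset] at hC
              exact Finset.union_sdiff_of_subset hC.2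
            · intro C' hC'
              rw [Finset.mem_powerset] at hC'
              have hdisj : Disjoint B C' :=
                Finset.disjoint_of_subset_right hC' Finset.disjoint_sdiff
              exact Finset.union_sdiff_cancel_left hdisj
            · intro C hC
              rw [Finset.mem_filter, Finset.mem_powerset] at hC
              have : E \ C = (E \ B) \ (C \ B) := by
                ext x
                simp only [Finset.mem_sdiff]
                have := @hC.2 x
                tauto
              rw [this]
          have re : ∀ C' ∈ (E \ B).powerset,
              ellOf f B * f C' * g ((E \ B) \ C')
              = ellOf f B * (f C' * g ((E \ B) \ C')) := by
            intro C' _; ring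
          rw [inner, Finset.sum_congr rfl re, ← Finset.mul_sum, hh, convOf]
        · intro C B
          simp only [Finset.mem_filter, Finset.mem_powerset, hfilt]
          constructor
          · rintro ⟨⟨hCE, ht₀C⟩, hBC, ht₀B⟩
            exact ⟨⟨hCE, hBC⟩, hBC.trans hCE, ht₀B⟩
          · rintro ⟨⟨hCE, hBC⟩, hBE, ht₀B⟩
            exact ⟨⟨hCE, hBC ht₀B⟩, hBC, ht₀B⟩
      have part2 : ∑ C ∈ E.powerset.filter (fun C => ¬ t₀ ∈ C), f C * g (E \ C)
          = ∑ B ∈ filt, ellOf g B * h (E \ B) := by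
        have e1 : ∀ C ∈ E.powerset.filter (fun C => ¬ t₀ ∈ C),
            f C * g (E \ C) = ∑ B ∈ (E \ C).powerset.filter (fun B => t₀ ∈ B),
              f C * (ellOf g B * g ((E \ C) \ B)) := by
          intro C hC
          rw [Finset.mem_filter, Finset.mem_powerset] at hC
          have ht₀EC : t₀ ∈ E \ C := Finset.mem_sdiff.mpr ⟨ht₀, hC.2⟩
          rw [← Finset.mul_sum, point hg ht₀EC]
        rw [Finset.sum_congr rfl e1]
        rw [Finset.sum_comm' (s := E.powerset.filter (fun C => ¬ t₀ ∈ C))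
          (t := fun C => (E \ C).powerset.filter (fun B => t₀ ∈ B))
          (t' := filt) (s' := fun B => (E \ B).powerset) ?_]
        · refine Finset.sum_congr rfl ?_
          intro B hB
          have e2 : ∀ C ∈ (E \ B).powerset,
              f C * (ellOf g B * g ((E \ C) \ B))
              = ellOf g B * (f C * g ((E \ B) \ C)) := by
            intro C hC
            rw [sdiff_right_comm]
            ring
          rw [Finset.sum_congr rfl e2, ← Finset.mul_sum]
          congr 1
        · intro C B
          simp only [Finset.mem_filter, Finset.mem_powerset, hfilt]
          constructor
          · rintro ⟨⟨hCE, ht₀C⟩, hBEC, ht₀B⟩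
            refine ⟨?_, hBEC.trans Finset.sdiff_subset, ht₀B⟩
            intro x hxC
            rw [Finset.mem_sdiff]
            refine ⟨hCE hxC, fun hxB => ?_⟩
            exact (Finset.mem_sdiff.mp (hBEC hxB)).2 hxC
          · rintro ⟨hCEB, hBE, ht₀B⟩
            have hCE : C ⊆ E := hCEB.trans Finset.sdiff_subset
            refine ⟨⟨hCE, fun ht₀C => (Finset.mem_sdiff.mp (hCEB ht₀C)).2 ht₀B⟩, ?_, ht₀B⟩
            intro x hxB
            rw [Finset.mem_sdiff]
            exact ⟨hBE hxB, fun hxC => (Finset.mem_sdiff.mp (hCEB hxC)).2 hxB⟩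
      rw [split, part1, part2, ← Finset.sum_add_distrib]
      refine Finset.sum_congr rfl ?_
      intro B _
      ring
    -- subtract
    have sub : ∑ B ∈ filt, (ellOf h B - ellOf f B - ellOf g B) * h (E \ B) = 0 := by
      have : ∑ B ∈ filt, (ellOf h B - ellOf f B - ellOf g B) * h (E \ B)
          = (∑ B ∈ filt, ellOf h B * h (E \ B))
            - ∑ B ∈ filt, (ellOf f B + ellOf g B) * h (E \ B) := by
        rw [← Finset.sum_sub_distrib]
        refine Finset.sum_congr rfl ?_
        intro B _; ring
      rw [this, pi, ← pii, sub_self]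
    have hEfilt : E ∈ filt := by
      simp [hfilt, Finset.mem_filter, Finset.mem_powerset, ht₀]
    rw [← Finset.add_sum_erase _ _ hEfilt] at sub
    have zero_rest : ∀ B ∈ filt.erase E,
        (ellOf h B - ellOf f B - ellOf g B) * h (E \ B) = 0 := by
      intro B hB
      have hBne := Finset.ne_of_mem_erase hB
      have hBmem := Finset.mem_of_mem_erase hB
      rw [hfilt, Finset.mem_filter, Finset.mem_powerset] at hBmem
      have hlt : B.card < n := by
        rw [← hcard]
        exact Finset.card_lt_card (Finset.ssubset_iff_subset_ne.mpr ⟨hBmem.1, hBne⟩)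
      have := IH B.card hlt B rfl ⟨t₀, hBmem.2⟩
      rw [hh] at this
      rw [this]
      ring
    rw [Finset.sum_eq_zero zero_rest, add_zero, Finset.sdiff_self, hh0, mul_one] at sub
    linarith [sub]



/-- the level-`i` factor -/
noncomputable def fac (x : ℕ → ℤ) (B : Finset T) (i : ℕ) : ℤ :=
  (descPochhammer ℤ (mOf Δ B i)).eval (x i - (wOf a b w B i : ℤ) + (mOf Δ B i : ℤ))

noncomputable def NN (x : ℕ → ℤ) (B : Finset T) : ℤ := ∏ᶠ i : ℕ, fac a b w Δ x B i

lemma mOf_zero {B : Finset T} {i : ℕ} (h : i ∉ B.image Δ) : mOf Δ B i = 0 := by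
  rw [mOf, Finset.card_eq_zero, Finset.filter_eq_empty_iff]
  intro t ht hΔ
  exact h (Finset.mem_image.mpr ⟨t, ht, hΔ⟩)

lemma fac_one {x : ℕ → ℤ} {B : Finset T} {i : ℕ} (h : i ∉ B.image Δ) :
    fac a b w Δ x B i = 1 := by
  rw [fac, mOf_zero Δ h, descPochhammer_zero, Polynomial.eval_one]

lemma NN_eq_prod {x : ℕ → ℤ} {B : Finset T} {J : Finset ℕ} (hJ : B.image Δ ⊆ J) :
    NN a b w Δ x B = ∏ i ∈ J, fac a b w Δ x B i := by
  apply finprod_eq_prod_of_mulSupport_subset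
  intro i hi
  simp only [Function.mem_mulSupport] at hi
  by_contra hiJ
  exact hi (fac_one a b w Δ (fun him => hiJ (hJ him)))

lemma NN_empty (x : ℕ → ℤ) : NN a b w Δ x ∅ = 1 := by
  rw [NN_eq_prod a b w Δ (J := ∅) (by simp), Finset.prod_empty]

lemma NN_congr {x x' : ℕ → ℤ} {B : Finset T} (h : ∀ i ∈ B.image Δ, x i = x' i) :
    NN a b w Δ x B = NN a b w Δ x' B := by
  rw [NN_eq_prod a b w Δ (Finset.Subset.refl _), NN_eq_prod a b w Δ (Finset.Subset.refl _)]
  refine Finset.prod_congr rfl ?_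
  intro i hi
  rw [fac, fac, h i hi]

lemma wOf_erase {B : Finset T} {t : T} (ht : t ∈ B) (i : ℕ) :
    wOf a b w B i = wOf a b w (B.erase t) i + (if a t ≤ i ∧ i < b t then w t else 0) := by
  rw [wOf, wOf, Finset.sum_filter, Finset.sum_filter]
  have h0 : (if a t ≤ i ∧ i < b t then w t else 0)
      = (fun s => if a s ≤ i ∧ i < b s then w s else 0) t := rfl
  rw [h0]
  exact (Finset.sum_erase_add B _ ht).symm

lemma mOf_erase {B : Finset T} {t : T} (ht : t ∈ B) (i : ℕ) :
    mOf Δ B i = mOf Δ (B.erase t) i + (if Δ t = i then 1 else 0) := by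
  rw [mOf, mOf, Finset.card_filter, Finset.card_filter]
  have h0 : (if Δ t = i then 1 else 0)
      = (fun s => if Δ s = i then 1 else 0) t := rfl
  rw [h0]
  exact (Finset.sum_erase_add B _ ht).symm

lemma desc_diff (m : ℕ) (v : ℤ) :
    (descPochhammer ℤ m).eval (v + 1) - (descPochhammer ℤ m).eval v
      = m * (descPochhammer ℤ (m - 1)).eval v := by
  rcases m with _ | m
  · simp
  · have e1 : (descPochhammer ℤ (m + 1)).eval (v + 1)
        = (v + 1) * (descPochhammer ℤ m).eval v := by
      rw [descPochhammer_succ_left]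
      simp only [Polynomial.eval_mul, Polynomial.eval_comp, Polynomial.eval_sub,
        Polynomial.eval_X, Polynomial.eval_one, add_sub_cancel_right]
    have e2 : (descPochhammer ℤ (m + 1)).eval v
        = (descPochhammer ℤ m).eval v * (v - m) := by
      rw [descPochhammer_succ_right]
      simp only [Polynomial.eval_mul, Polynomial.eval_sub, Polynomial.eval_X,
        Polynomial.eval_natCast]
    rw [Nat.add_sub_cancel, e1, e2]
    push_cast
    ring

/-- The key difference identity. -/
lemma deltaN (i0 : ℕ) (x : ℕ → ℤ) (B : Finset T) :
    NN a b w Δ (fun i => x i + (if i = i0 then 1 else 0)) B - NN a b w Δ x B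
    = ∑ t ∈ B.filter (fun t => Δ t = i0),
        NN a b w Δ
          (fun i => x i - (if a t ≤ i ∧ i < b t then (w t : ℤ) else 0)
            + (if i = i0 then 1 else 0)) (B.erase t) := by
  set J := B.image Δ with hJ
  by_cases hi0 : i0 ∈ J
  · -- main case
    set xe := fun i => x i + (if i = i0 then (1:ℤ) else 0) with hxe
    rw [NN_eq_prod a b w Δ (Finset.Subset.refl J) (x := xe),
        NN_eq_prod a b w Δ (Finset.Subset.refl J) (x := x)]
    rw [← Finset.mul_prod_erase J _ hi0, ← Finset.mul_prod_erase J
      (f := fac a b w Δ x B) hi0]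
    have hsame : ∀ i ∈ J.erase i0, fac a b w Δ xe B i = fac a b w Δ x B i := by
      intro i hi
      have hne : i ≠ i0 := Finset.ne_of_mem_erase hi
      rw [fac, fac, hxe]
      simp only [if_neg hne, add_zero]
    rw [Finset.prod_congr rfl hsame, ← sub_mul]
    set m := mOf Δ B i0 with hm
    set v := x i0 - (wOf a b w B i0 : ℤ) + (m : ℤ) with hv
    have hfacdiff : fac a b w Δ xe B i0 - fac a b w Δ x B i0
        = (m : ℤ) * (descPochhammer ℤ (m - 1)).eval v := by
      rw [fac, fac]
      have hxei0 : xe i0 = x i0 + 1 := by simp [hxe]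
      rw [hxei0]
      have harg : x i0 + 1 - (wOf a b w B i0 : ℤ) + (mOf Δ B i0 : ℤ) = v + 1 := by
        rw [hv, hm]; ring
      have harg2 : x i0 - (wOf a b w B i0 : ℤ) + (mOf Δ B i0 : ℤ) = v := by
        rw [hv, hm]
      rw [harg, harg2]
      have hmm : mOf Δ B i0 = m := hm.symm
      rw [hmm, desc_diff]
    rw [hfacdiff]
    have hcard : (B.filter (fun t => Δ t = i0)).card = m := rfl
    have per_t : ∀ t ∈ B.filter (fun t => Δ t = i0),
        NN a b w Δ
          (fun i => x i - (if a t ≤ i ∧ i < b t then (w t : ℤ) else 0)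
            + (if i = i0 then 1 else 0)) (B.erase t)
        = (descPochhammer ℤ (m - 1)).eval v * ∏ i ∈ J.erase i0, fac a b w Δ x B i := by
      intro t htf
      rw [Finset.mem_filter] at htf
      obtain ⟨htB, htΔ⟩ := htf
      have hm1 : 1 ≤ m := by
        rw [hm, mOf]
        exact Finset.card_pos.mpr ⟨t, Finset.mem_filter.mpr ⟨htB, htΔ⟩⟩
      set xt := fun i => x i - (if a t ≤ i ∧ i < b t then (w t : ℤ) else 0)
        + (if i = i0 then (1:ℤ) else 0) with hxt
      have hsubJ : (B.erase t).image Δ ⊆ J := by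
        rw [hJ]
        exact Finset.image_subset_image (Finset.erase_subset t B)
      rw [NN_eq_prod a b w Δ hsubJ, ← Finset.mul_prod_erase J _ hi0]
      congr 1
      · -- level i0 factor
        rw [fac]
        have hm' : mOf Δ (B.erase t) i0 = m - 1 := by
          have h2 := mOf_erase Δ htB i0
          rw [if_pos htΔ] at h2
          omega
        have hw' : (wOf a b w (B.erase t) i0 : ℤ)
            = (wOf a b w B i0 : ℤ) - (if a t ≤ i0 ∧ i0 < b t then (w t : ℤ) else 0) := by
          have h3 := wOf_erase a b w htB i0
          rw [h3]
          push_cast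
          by_cases hp : a t ≤ i0 ∧ i0 < b t <;> simp [hp]
        have hxti0 : xt i0 = x i0 - (if a t ≤ i0 ∧ i0 < b t then (w t : ℤ) else 0) + 1 := by
          simp [hxt]
        rw [hm', hw', hxti0]
        have harg : x i0 - (if a t ≤ i0 ∧ i0 < b t then (w t : ℤ) else 0) + 1
            - ((wOf a b w B i0 : ℤ) - (if a t ≤ i0 ∧ i0 < b t then (w t : ℤ) else 0))
            + ((m - 1 : ℕ) : ℤ) = v := by
          have h4 : ((m - 1 : ℕ) : ℤ) = (m : ℤ) - 1 := by omega
          rw [h4, hv]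
          ring
        rw [harg]
      · -- other levels
        refine Finset.prod_congr rfl ?_
        intro i hi
        have hne : i ≠ i0 := Finset.ne_of_mem_erase hi
        rw [fac, fac]
        have hm' : mOf Δ (B.erase t) i = mOf Δ B i := by
          have h2 := mOf_erase Δ htB i
          rw [if_neg (fun h => hne ((htΔ.symm.trans h).symm))] at h2
          omega
        have hw' : (wOf a b w (B.erase t) i : ℤ)
            = (wOf a b w B i : ℤ) - (if a t ≤ i ∧ i < b t then (w t : ℤ) else 0) := by
          have h3 := wOf_erase a b w htB i
          rw [h3]
          push_cast
          by_cases hp : a t ≤ i ∧ i < b t <;> simp [hp]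
        have hxti : xt i = x i - (if a t ≤ i ∧ i < b t then (w t : ℤ) else 0) := by
          simp [hxt, hne]
        rw [hm', hw', hxti]
        have harg : x i - (if a t ≤ i ∧ i < b t then (w t : ℤ) else 0)
            - ((wOf a b w B i : ℤ) - (if a t ≤ i ∧ i < b t then (w t : ℤ) else 0))
            + (mOf Δ B i : ℤ)
            = x i - (wOf a b w B i : ℤ) + (mOf Δ B i : ℤ) := by
          ring
        rw [harg]
    rw [Finset.sum_congr rfl per_t, Finset.sum_const, nsmul_eq_mul, hcard]
    ring
  · -- i0 not a level of B
    have hfilt : B.filter (fun t => Δ t = i0) = ∅ := by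
      rw [Finset.filter_eq_empty_iff]
      intro t ht hΔ
      exact hi0 (Finset.mem_image.mpr ⟨t, ht, hΔ⟩)
    rw [hfilt, Finset.sum_empty]
    have h5 : NN a b w Δ (fun i => x i + (if i = i0 then 1 else 0)) B = NN a b w Δ x B := by
      apply NN_congr
      intro i hi
      have h6 : i ≠ i0 := by rintro rfl; exact hi0 hi
      simp [h6]
    rw [h5, sub_self]



noncomputable def SS (x y : ℕ → ℤ) (E : Finset T) : ℤ :=
  ∑ B ∈ E.powerset, NN a b w Δ x B * NN a b w Δ y (E \ B)

lemma SS_congr {x x' y y' : ℕ → ℤ} {E : Finset T}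
    (hx : ∀ i ∈ E.image Δ, x i = x' i) (hy : ∀ i ∈ E.image Δ, y i = y' i) :
    SS a b w Δ x y E = SS a b w Δ x' y' E := by
  refine Finset.sum_congr rfl ?_
  intro B hB
  rw [Finset.mem_powerset] at hB
  have h1 : NN a b w Δ x B = NN a b w Δ x' B :=
    NN_congr a b w Δ (fun i hi => hx i (Finset.image_subset_image hB hi))
  have h2 : NN a b w Δ y (E \ B) = NN a b w Δ y' (E \ B) :=
    NN_congr a b w Δ (fun i hi => hy i (Finset.image_subset_image Finset.sdiff_subset hi))
  rw [h1, h2]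

lemma sdiff_helper1 {E B : Finset T} {t : T} (ht : t ∈ B) :
    E \ B = (E.erase t) \ (B.erase t) := by
  ext x
  simp only [Finset.mem_sdiff, Finset.mem_erase]
  constructor
  · rintro ⟨hxE, hxB⟩
    have hxt : x ≠ t := by rintro rfl; exact hxB ht
    exact ⟨⟨hxt, hxE⟩, fun hc => hxB hc.2⟩
  · rintro ⟨⟨hxt, hxE⟩, hc⟩
    refine ⟨hxE, fun hxB => hc ⟨hxt, hxB⟩⟩

lemma sdiff_helper2 {E B : Finset T} {t : T} (htB : t ∉ B) :
    (E \ B).erase t = (E.erase t) \ B := by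
  ext x
  simp only [Finset.mem_sdiff, Finset.mem_erase]
  tauto

theorem SS_inv : ∀ (n : ℕ) (E : Finset T), E.card = n →
    ∀ x y x' y' : ℕ → ℤ, (∀ i, x i + y i = x' i + y' i) →
    SS a b w Δ x y E = SS a b w Δ x' y' E := by
  intro n
  induction n using Nat.strong_induction_on with
  | _ n IH =>
    intro E hcard
    -- Unit transfer step at a single level i0.
    have unit : ∀ (i0 : ℕ) (x y : ℕ → ℤ),
        SS a b w Δ x y E
        = SS a b w Δ (fun i => x i + (if i = i0 then 1 else 0))
            (fun i => y i - (if i = i0 then 1 else 0)) E := by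
      intro i0 x y
      have main : SS a b w Δ (fun i => x i + (if i = i0 then 1 else 0))
          (fun i => y i - (if i = i0 then 1 else 0)) E - SS a b w Δ x y E = 0 := by
        rw [SS, SS, ← Finset.sum_sub_distrib]
        have perB : ∀ B ∈ E.powerset,
            NN a b w Δ (fun i => x i + (if i = i0 then 1 else 0)) B *
                NN a b w Δ (fun i => y i - (if i = i0 then 1 else 0)) (E \ B)
              - NN a b w Δ x B * NN a b w Δ y (E \ B)
            = (∑ t ∈ B.filter (fun t => Δ t = i0),
                NN a b w Δ (fun i => x i - (if a t ≤ i ∧ i < b t then (w t : ℤ) else 0)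
                  + (if i = i0 then 1 else 0)) (B.erase t)
                * NN a b w Δ (fun i => y i - (if i = i0 then 1 else 0)) (E \ B))
              - (∑ t ∈ (E \ B).filter (fun t => Δ t = i0),
                NN a b w Δ x B *
                  NN a b w Δ (fun i => y i - (if a t ≤ i ∧ i < b t then (w t : ℤ) else 0))
                    ((E \ B).erase t)) := by
          intro B _
          have hdx := deltaN a b w Δ i0 x B
          have hdy := deltaN a b w Δ i0 (fun j => y j - (if j = i0 then (1:ℤ) else 0)) (E \ B)
          have hyy : (fun i => (fun j => y j - (if j = i0 then (1:ℤ) else 0)) i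
              + (if i = i0 then 1 else 0)) = y := by
            funext i; dsimp only; ring
          rw [hyy] at hdy
          have hyfix : ∀ t ∈ (E \ B).filter (fun t => Δ t = i0),
              NN a b w Δ (fun i => (fun j => y j - (if j = i0 then (1:ℤ) else 0)) i
                - (if a t ≤ i ∧ i < b t then (w t : ℤ) else 0)
                + (if i = i0 then 1 else 0)) ((E \ B).erase t)
              = NN a b w Δ (fun i => y i - (if a t ≤ i ∧ i < b t then (w t : ℤ) else 0))
                  ((E \ B).erase t) := by
            intro t _
            refine congrArg (fun z => NN a b w Δ z ((E \ B).erase t)) ?_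
            funext i; dsimp only; ring
          rw [Finset.sum_congr rfl hyfix] at hdy
          rw [← Finset.sum_mul, ← Finset.mul_sum]
          linear_combination
            NN a b w Δ (fun i => y i - (if i = i0 then 1 else 0)) (E \ B) * hdx
            - NN a b w Δ x B * hdy
        rw [Finset.sum_congr rfl perB, Finset.sum_sub_distrib]
        -- first double sum
        have hS1 : ∑ B ∈ E.powerset, ∑ t ∈ B.filter (fun t => Δ t = i0),
            NN a b w Δ (fun i => x i - (if a t ≤ i ∧ i < b t then (w t : ℤ) else 0)
                + (if i = i0 then 1 else 0)) (B.erase t)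
              * NN a b w Δ (fun i => y i - (if i = i0 then 1 else 0)) (E \ B)
            = ∑ t ∈ E.filter (fun t => Δ t = i0),
              SS a b w Δ (fun i => x i - (if a t ≤ i ∧ i < b t then (w t : ℤ) else 0)
                + (if i = i0 then 1 else 0)) (fun i => y i - (if i = i0 then 1 else 0))
                (E.erase t) := by
          rw [Finset.sum_comm' (s := E.powerset) (t := fun B => B.filter (fun t => Δ t = i0))
            (t' := E.filter (fun t => Δ t = i0))
            (s' := fun t => E.powerset.filter (fun B => t ∈ B)) ?_]
          · refine Finset.sum_congr rfl ?_
            intro t htE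
            rw [Finset.mem_filter] at htE
            rw [SS]
            refine Finset.sum_nbij' (fun B => B.erase t) (fun B' => insert t B') ?_ ?_ ?_ ?_ ?_
            · intro B hB
              rw [Finset.mem_filter, Finset.mem_powerset] at hB
              rw [Finset.mem_powerset]
              exact Finset.erase_subset_erase t hB.1
            · intro B' hB'
              rw [Finset.mem_powerset] at hB'
              rw [Finset.mem_filter, Finset.mem_powerset]
              constructor
              · exact Finset.insert_subset htE.1 (hB'.trans (Finset.erase_subset t E))
              · exact Finset.mem_insert_self t B'
            · intro B hB
              rw [Finset.mem_filter] at hB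
              exact Finset.insert_erase hB.2
            · intro B' hB'
              rw [Finset.mem_powerset] at hB'
              exact Finset.erase_insert (fun hc => (Finset.mem_erase.mp (hB' hc)).1 rfl)
            · intro B hB
              rw [Finset.mem_filter, Finset.mem_powerset] at hB
              rw [sdiff_helper1 hB.2]
          · intro B t
            simp only [Finset.mem_powerset, Finset.mem_filter]
            constructor
            · rintro ⟨hBE, htB, htΔ⟩
              exact ⟨⟨hBE, htB⟩, hBE htB, htΔ⟩
            · rintro ⟨⟨hBE, htB⟩, htE, htΔ⟩
              exact ⟨hBE, htB, htΔ⟩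
        -- second double sum
        have hS2 : ∑ B ∈ E.powerset, ∑ t ∈ (E \ B).filter (fun t => Δ t = i0),
            NN a b w Δ x B *
              NN a b w Δ (fun i => y i - (if a t ≤ i ∧ i < b t then (w t : ℤ) else 0))
                ((E \ B).erase t)
            = ∑ t ∈ E.filter (fun t => Δ t = i0),
              SS a b w Δ x (fun i => y i - (if a t ≤ i ∧ i < b t then (w t : ℤ) else 0))
                (E.erase t) := by
          rw [Finset.sum_comm' (s := E.powerset)
            (t := fun B => (E \ B).filter (fun t => Δ t = i0))
            (t' := E.filter (fun t => Δ t = i0))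
            (s' := fun t => (E.erase t).powerset) ?_]
          · refine Finset.sum_congr rfl ?_
            intro t htE
            rw [SS]
            refine Finset.sum_congr rfl ?_
            intro B hB
            rw [Finset.mem_powerset, Finset.subset_erase] at hB
            rw [sdiff_helper2 hB.2]
          · intro B t
            simp only [Finset.mem_powerset, Finset.mem_filter, Finset.mem_sdiff,
              Finset.subset_erase]
            constructor
            · rintro ⟨hBE, ⟨htE, htB⟩, htΔ⟩
              exact ⟨⟨hBE, htB⟩, htE, htΔ⟩
            · rintro ⟨⟨hBE, htB⟩, htE, htΔ⟩
              exact ⟨hBE, ⟨htE, htB⟩, htΔ⟩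
        rw [hS1, hS2, ← Finset.sum_sub_distrib]
        apply Finset.sum_eq_zero
        intro t htE
        rw [Finset.mem_filter] at htE
        have hcard' : (E.erase t).card < n := by
          rw [Finset.card_erase_of_mem htE.1]
          have : 1 ≤ E.card := Finset.card_pos.mpr ⟨t, htE.1⟩
          omega
        rw [IH ((E.erase t).card) hcard' (E.erase t) rfl
          (fun i => x i - (if a t ≤ i ∧ i < b t then (w t : ℤ) else 0)
            + (if i = i0 then 1 else 0))
          (fun i => y i - (if i = i0 then 1 else 0))
          x
          (fun i => y i - (if a t ≤ i ∧ i < b t then (w t : ℤ) else 0))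
          (fun i => by ring), sub_self]
      linarith [main]
    -- natural-number multi-step
    have natstep : ∀ (d : ℕ) (i0 : ℕ) (x y : ℕ → ℤ),
        SS a b w Δ x y E
        = SS a b w Δ (fun i => x i + (d : ℤ) * (if i = i0 then 1 else 0))
            (fun i => y i - (d : ℤ) * (if i = i0 then 1 else 0)) E := by
      intro d
      induction d with
      | zero =>
        intro i0 x y
        have e1 : (fun i => x i + ((0 : ℕ) : ℤ) * (if i = i0 then 1 else 0)) = x := by
          funext i; push_cast; ring
        have e2 : (fun i => y i - ((0 : ℕ) : ℤ) * (if i = i0 then 1 else 0)) = y := by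
          funext i; push_cast; ring
        rw [e1, e2]
      | succ k IHk =>
        intro i0 x y
        have h1 := IHk i0 x y
        have h2 := unit i0 (fun i => x i + (k : ℤ) * (if i = i0 then 1 else 0))
          (fun i => y i - (k : ℤ) * (if i = i0 then 1 else 0))
        have h3 : SS a b w Δ x y E
            = SS a b w Δ
              (fun i => x i + (k : ℤ) * (if i = i0 then 1 else 0) + (if i = i0 then 1 else 0))
              (fun i => y i - (k : ℤ) * (if i = i0 then 1 else 0) - (if i = i0 then 1 else 0))
              E := h1.trans h2
        have e1 : (fun i => x i + (k : ℤ) * (if i = i0 then 1 else 0) + (if i = i0 then 1 else 0))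
            = (fun i => x i + ((k + 1 : ℕ) : ℤ) * (if i = i0 then 1 else 0)) := by
          funext i; push_cast; ring
        have e2 : (fun i => y i - (k : ℤ) * (if i = i0 then 1 else 0) - (if i = i0 then 1 else 0))
            = (fun i => y i - ((k + 1 : ℕ) : ℤ) * (if i = i0 then 1 else 0)) := by
          funext i; push_cast; ring
        rw [e1, e2] at h3
        exact h3
    -- integer multi-step
    have intstep : ∀ (d : ℤ) (i0 : ℕ) (x y : ℕ → ℤ),
        SS a b w Δ x y E
        = SS a b w Δ (fun i => x i + d * (if i = i0 then 1 else 0))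
            (fun i => y i - d * (if i = i0 then 1 else 0)) E := by
      intro d i0 x y
      rcases le_or_gt 0 d with hd | hd
      · obtain ⟨m, rfl⟩ := Int.eq_ofNat_of_zero_le hd
        exact natstep m i0 x y
      · have hm : 0 ≤ -d := by omega
        obtain ⟨m, hm2⟩ := Int.eq_ofNat_of_zero_le hm
        have h1 := natstep m i0 (fun i => x i + d * (if i = i0 then 1 else 0))
          (fun i => y i - d * (if i = i0 then 1 else 0))
        have e1 : (fun i => (fun j => x j + d * (if j = i0 then (1:ℤ) else 0)) i
            + (m : ℤ) * (if i = i0 then 1 else 0)) = x := by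
          funext i; dsimp only; rw [← hm2]; ring
        have e2 : (fun i => (fun j => y j - d * (if j = i0 then (1:ℤ) else 0)) i
            - (m : ℤ) * (if i = i0 then 1 else 0)) = y := by
          funext i; dsimp only; rw [← hm2]; ring
        rw [e1, e2] at h1
        exact h1.symm
    -- the walk
    have walk : ∀ (L : Finset ℕ) (x y x' y' : ℕ → ℤ),
        (∀ i, x i + y i = x' i + y' i) → (∀ i ∉ L, x' i = x i ∧ y' i = y i) →
        SS a b w Δ x y E = SS a b w Δ x' y' E := by
      intro L
      induction L using Finset.induction_on with
      | empty =>
        intro x y x' y' hsum h0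
        have hx : x' = x := funext (fun i => (h0 i (Finset.notMem_empty i)).1)
        have hy : y' = y := funext (fun i => (h0 i (Finset.notMem_empty i)).2)
        rw [hx, hy]
      | insert i0 L' hnotmem IH2 =>
        intro x y x' y' hsum h0
        have h1 := intstep (x' i0 - x i0) i0 x y
        rw [h1]
        apply IH2
        · intro i
          rw [← hsum i]
          ring
        · intro i hiL'
          by_cases hii : i = i0
          · subst hii
            constructor
            · rw [if_pos rfl]
              ring
            · rw [if_pos rfl]
              have := hsum i
              linarith [hsum i]
          · have hnot : i ∉ insert i0 L' := by
              rw [Finset.mem_insert]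
              push_neg
              exact ⟨hii, hiL'⟩
            obtain ⟨ex, ey⟩ := h0 i hnot
            constructor
            · rw [if_neg hii, ex]
              ring
            · rw [if_neg hii, ey]
              ring
    -- conclude
    intro x y x' y' hsum
    set L := E.image Δ with hL
    set x'' := fun i => if i ∈ L then x' i else x i with hx''
    set y'' := fun i => if i ∈ L then y' i else y i with hy''
    have step1 : SS a b w Δ x' y' E = SS a b w Δ x'' y'' E := by
      apply SS_congr
      · intro i hi
        rw [hx'']
        dsimp only
        rw [if_pos (by rwa [← hL] at hi)]
      · intro i hi
        rw [hy'']
        dsimp only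
        rw [if_pos (by rwa [← hL] at hi)]
    have step2 : SS a b w Δ x y E = SS a b w Δ x'' y'' E := by
      apply walk L
      · intro i
        rw [hx'', hy'']
        dsimp only
        by_cases hi : i ∈ L
        · rw [if_pos hi, if_pos hi]
          exact hsum i
        · rw [if_neg hi, if_neg hi]
      · intro i hi
        rw [hx'', hy'']
        dsimp only
        rw [if_neg hi, if_neg hi]
        exact ⟨rfl, rfl⟩
    rw [step2, ← step1]


end QstarAux

/-- `Q̃_*(k) = ∑_P (−1)^{|P|−1}(|P|−1)! ∏_{E ∈ P} N_*` is linear in the offset `k`. -/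
theorem Qstar_offset_linear (T : Type) [Fintype T] [Nonempty T]
    (a b w Δ : T → ℕ)
    (hab : ∀ t, a t < b t) (hw : ∀ t, 1 ≤ w t)
    (hlong : ∀ t, ¬ (b t = a t + 1 ∧ w t = 1))
    (hΔ : ∀ t, a t ≤ Δ t ∧ Δ t < b t) :
    ∃ A B : ℤ, ∀ k : ℕ,
      (∑ P : Finset (Finset T),
        if IsPartitionOfUniv P then
          (-1 : ℤ) ^ (P.card - 1) * (Nat.factorial (P.card - 1) : ℤ) *
            ∏ E ∈ P, NstarOffset a b w Δ k E
        else 0)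
      = A * (k : ℤ) + B := by
  classical
  open QstarAux in
  -- the family of block-counting functions, with per-offset variables
  set F : ℕ → Finset T → ℤ := fun k B => NN a b w Δ (fun i => (k : ℤ) + (i : ℤ)) B with hF
  have hFN : ∀ (k : ℕ) (E : Finset T), NstarOffset a b w Δ k E = F k E := by
    intro k E
    rw [hF]
    rfl
  have hFempty : ∀ k : ℕ, F k ∅ = 1 := by
    intro k
    rw [hF]
    exact NN_empty a b w Δ _
  set Q : ℕ → ℤ := fun k => ellOf (F k) Finset.univ with hQdef
  -- the statement's sum equals `Q k`
  have hQ : ∀ k : ℕ,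
      (∑ P : Finset (Finset T),
        if IsPartitionOfUniv P then
          (-1 : ℤ) ^ (P.card - 1) * (Nat.factorial (P.card - 1) : ℤ) *
            ∏ E ∈ P, NstarOffset a b w Δ k E
        else 0) = Q k := by
    intro k
    have hset : (Finset.univ.filter IsPartitionOfUniv : Finset (Finset (Finset T)))
        = partsOn Finset.univ := by
      rw [partsOn, Finset.powerset_univ, Finset.powerset_univ]
      apply Finset.filter_congr
      intro P _
      constructor
      · rintro ⟨h1, h2⟩
        exact ⟨h1, fun B _ => Finset.subset_univ B, fun x _ => h2 x⟩
      · rintro ⟨h1, h2, h3⟩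
        exact ⟨h1, fun x => h3 x (Finset.mem_univ x)⟩
    rw [hQdef]
    dsimp only
    have hunf : ellOf (F k) (Finset.univ : Finset T)
        = ∑ P ∈ partsOn (Finset.univ : Finset T), cpart P.card * ∏ B ∈ P, F k B := rfl
    rw [hunf, ← hset, Finset.sum_filter]
    refine Finset.sum_congr rfl ?_
    intro P _
    by_cases h : IsPartitionOfUniv P
    · rw [if_pos h, if_pos h, Finset.prod_congr rfl (fun E _ => hFN k E), cpart]
    · rw [if_neg h, if_neg h]
  -- key second-difference identity
  have hkey : ∀ k : ℕ, Q k + Q (k + 2) = Q (k + 1) + Q (k + 1) := by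
    intro k
    have hconv : convOf (F k) (F (k + 2)) = convOf (F (k + 1)) (F (k + 1)) := by
      funext E
      have h1 : convOf (F k) (F (k + 2)) E
          = SS a b w Δ (fun i => ((k : ℕ) : ℤ) + (i : ℤ))
              (fun i => ((k + 2 : ℕ) : ℤ) + (i : ℤ)) E := rfl
      have h2 : convOf (F (k + 1)) (F (k + 1)) E
          = SS a b w Δ (fun i => ((k + 1 : ℕ) : ℤ) + (i : ℤ))
              (fun i => ((k + 1 : ℕ) : ℤ) + (i : ℤ)) E := rfl
      rw [h1, h2]
      apply SS_inv a b w Δ E.card E rfl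
      intro i
      push_cast
      ring
    have e1 := ell_conv (hFempty k) (hFempty (k + 2)) Finset.univ.card Finset.univ rfl
      Finset.univ_nonempty
    have e2 := ell_conv (hFempty (k + 1)) (hFempty (k + 1)) Finset.univ.card Finset.univ rfl
      Finset.univ_nonempty
    rw [hconv] at e1
    rw [hQdef]
    dsimp only
    rw [← e1, ← e2]
  -- conclude linearity
  refine ⟨Q 1 - Q 0, Q 0, ?_⟩
  have hlin : ∀ k : ℕ, Q k = (Q 1 - Q 0) * (k : ℤ) + Q 0 := by
    intro k
    induction k using Nat.strong_induction_on with
    | _ k IHk =>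
      match k with
      | 0 => push_cast; ring
      | 1 => push_cast; ring
      | (m + 2) =>
        have h1 := IHk m (by omega)
        have h2 := IHk (m + 1) (by omega)
        have h3 := hkey m
        rw [h1, h2] at h3
        push_cast at h3 ⊢
        linarith [h3]
  intro k
  rw [hQ k, hlin k]
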